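/- There is a universal constant C such that for every ε > 0 and every n ≥ 2 there exists an n-qubit protocol strategy whose acceptance probability is at least ω_opt − ε and whose Hilbert spaces H_A and H_B each have dimension at most 2^{C·(log n)/ε²}. -/

import Mathlib

open scoped Matrix Kronecker ComplexConjugate

noncomputable section

abbrev Reg (n : ℕ) := (Fin n × Fin 2) → Fin 2

def cnorm {ι : Type*} [Fintype ι] (v : ι → ℂ) : ℝ :=
  Real.sqrt (∑ i, ‖v i‖ ^ 2)

def cinner {ι : Type*} [Fintype ι] (v w : ι → ℂ) : ℂ :=
  ∑ i, (starRingEnd ℂ) (v i) * w i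

def IsReflection {ι : Type*} [Fintype ι] [DecidableEq ι] (M : Matrix ι ι ℂ) : Prop :=
  M.IsHermitian ∧ M * M = 1

def sx : Matrix (Fin 2) (Fin 2) ℂ := !![0, 1; 1, 0]
def sy : Matrix (Fin 2) (Fin 2) ℂ := !![0, -Complex.I; Complex.I, 0]
def sz : Matrix (Fin 2) (Fin 2) ℂ := !![1, 0; 0, -1]

def onQubit {K : Type*} [Fintype K] [DecidableEq K] (k : K) (M : Matrix (Fin 2) (Fin 2) ℂ) :
    Matrix (K → Fin 2) (K → Fin 2) ℂ :=
  fun f g => if ∀ k', k' ≠ k → f k' = g k' then M (f k) (g k) else 0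

def eprAmp : Fin 2 → Fin 2 → ℂ := fun a b => if a = b then ((Real.sqrt 2 : ℝ) : ℂ)⁻¹ else 0

def eprLocal (n : ℕ) : Reg n → ℂ := fun f => ∏ j : Fin n, eprAmp (f (j, 0)) (f (j, 1))

def psiExt {dA dB : ℕ} (n : ℕ) (ψ : Fin dA × Fin dB → ℂ) :
    (Fin dA × Reg n) × (Fin dB × Reg n) → ℂ :=
  fun p => ψ (p.1.1, p.2.1) * eprLocal n p.1.2 * eprLocal n p.2.2

def NQubitHyp (n : ℕ) (ε : ℝ) {dA dB : ℕ}
    (XA ZA : Fin n → Matrix (Fin dA) (Fin dA) ℂ)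
    (XB ZB : Fin n → Matrix (Fin dB) (Fin dB) ℂ)
    (ψ : Fin dA × Fin dB → ℂ) : Prop :=
  cnorm ψ = 1 ∧
  (∀ j, IsReflection (XA j) ∧ IsReflection (ZA j) ∧ IsReflection (XB j) ∧ IsReflection (ZB j)) ∧
  (∀ j, XA j * ZA j + ZA j * XA j = 0) ∧
  (∀ j, XB j * ZB j + ZB j * XB j = 0) ∧
  (∀ P Q : Fin n → Matrix (Fin dA) (Fin dA) ℂ, (P = XA ∨ P = ZA) → (Q = XA ∨ Q = ZA) →
    ∀ i j : Fin n, i ≠ j →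
    cnorm (((P i * Q j - Q j * P i) ⊗ₖ (1 : Matrix (Fin dB) (Fin dB) ℂ)).mulVec ψ) ≤ ε) ∧
  (∀ P Q : Fin n → Matrix (Fin dB) (Fin dB) ℂ, (P = XB ∨ P = ZB) → (Q = XB ∨ Q = ZB) →
    ∀ i j : Fin n, i ≠ j →
    cnorm (((1 : Matrix (Fin dA) (Fin dA) ℂ) ⊗ₖ (P i * Q j - Q j * P i)).mulVec ψ) ≤ ε) ∧
  (∀ (P : Fin n → Matrix (Fin dA) (Fin dA) ℂ) (P' : Fin n → Matrix (Fin dB) (Fin dB) ℂ),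
    ((P = XA ∧ P' = XB) ∨ (P = ZA ∧ P' = ZB)) →
    ∀ j, cnorm ((P j ⊗ₖ P' j).mulVec ψ - ψ) ≤ ε)


def sgn : Bool → ℂ := fun x => if x then 1 else -1

def omegaOpt : ℝ := (1 + 2 * Real.cos (Real.pi / 8) ^ 2) / 3

/-- A two-outcome-pair projective measurement. -/
def ProjMeas {ι : Type*} [Fintype ι] [DecidableEq ι] (Pi : Bool → Bool → Matrix ι ι ℂ) : Prop :=
  (∀ x y, (Pi x y).IsHermitian ∧ Pi x y * Pi x y = Pi x y) ∧
  (∀ x y x' y', (x, y) ≠ (x', y') → Pi x y * Pi x' y' = 0) ∧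
  (∑ x : Bool, ∑ y : Bool, Pi x y) = 1

/-- `R i b j c` is the marginal observable `R^{jc}_{ib}` obtained from the joint measurements. -/
def RChar {ι : Type*} [Fintype ι] [DecidableEq ι] {n : ℕ}
    (Pi : Fin n → Fin n → Bool → Bool → Bool → Bool → Matrix ι ι ℂ)
    (R : Fin n → Bool → Fin n → Bool → Matrix ι ι ℂ) : Prop :=
  ∀ i j : Fin n, i < j → ∀ b c,
    R i b j c = (∑ x : Bool, ∑ y : Bool, sgn x • Pi i j b c x y) ∧
    R j c i b = (∑ x : Bool, ∑ y : Bool, sgn y • Pi i j b c x y)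

/-- The acceptance probability ω = (ω₁ + ω₂ + ω₃)/3 of a strategy for the n-qubit protocol. -/
def accProb {ιA ιB : Type*} [Fintype ιA] [DecidableEq ιA] [Fintype ιB] [DecidableEq ιB] (n : ℕ)
    (XA ZA : Fin n → Matrix ιA ιA ℂ)
    (XB ZB : Fin n → Matrix ιB ιB ℂ)
    (RA : Fin n → Bool → Fin n → Bool → Matrix ιA ιA ℂ)
    (RB : Fin n → Bool → Fin n → Bool → Matrix ιB ιB ℂ)
    (ψ : ιA × ιB → ℂ) : ℝ :=
  (1 / 3) * (
    (1 / (2 * (n : ℝ))) * ∑ i : Fin n, ∑ a : Bool,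
      (1 + (cinner ψ (((if a then XA i else ZA i) ⊗ₖ
          (if a then XB i else ZB i)).mulVec ψ)).re) / 2
    + (1 / (8 * (n : ℝ) * ((n : ℝ) - 1))) * ∑ i : Fin n, ∑ j : Fin n,
        (if i = j then 0 else ∑ a : Bool, ∑ b : Bool, ∑ c : Bool,
          (1 + (if a && b then -1 else 1) *
            (cinner ψ (((if a then XA i else ZA i) ⊗ₖ RB i b j c).mulVec ψ)).re) / 2)
    + (1 / (8 * (n : ℝ) * ((n : ℝ) - 1))) * ∑ i : Fin n, ∑ j : Fin n,
        (if i = j then 0 else ∑ a : Bool, ∑ b : Bool, ∑ c : Bool,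
          (1 + (if a && b then -1 else 1) *
            (cinner ψ ((RA i b j c ⊗ₖ (if a then XB i else ZB i)).mulVec ψ)).re) / 2))

/-- Validity of a strategy for the n-qubit protocol. -/
def StratValid {ιA ιB : Type*} [Fintype ιA] [DecidableEq ιA] [Fintype ιB] [DecidableEq ιB]
    (n : ℕ)
    (XA ZA : Fin n → Matrix ιA ιA ℂ)
    (XB ZB : Fin n → Matrix ιB ιB ℂ)
    (PiA : Fin n → Fin n → Bool → Bool → Bool → Bool → Matrix ιA ιA ℂ)
    (PiB : Fin n → Fin n → Bool → Bool → Bool → Bool → Matrix ιB ιB ℂ)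
    (ψ : ιA × ιB → ℂ) : Prop :=
  cnorm ψ = 1 ∧
  (∀ i, IsReflection (XA i) ∧ IsReflection (ZA i) ∧ IsReflection (XB i) ∧ IsReflection (ZB i)) ∧
  (∀ i j : Fin n, i < j → ∀ b c, ProjMeas (PiA i j b c)) ∧
  (∀ i j : Fin n, i < j → ∀ b c, ProjMeas (PiB i j b c))


namespace Stmt11

/-! ### 2×2 building blocks -/

def vR : ℝ := (Real.sqrt 2)⁻¹
def vC : ℂ := ((vR : ℝ) : ℂ)

lemma sqrt2_pos : 0 < Real.sqrt 2 := Real.sqrt_pos.mpr (by norm_num)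

lemma sqrt2_gt_one : 1 < Real.sqrt 2 := by
  nlinarith [Real.sq_sqrt (show (0:ℝ) ≤ 2 by norm_num), Real.sqrt_nonneg 2]

lemma vR_pos : 0 < vR := by unfold vR; positivity

lemma vR_lt_one : vR < 1 := by
  have h2 := sqrt2_pos
  have h3 : (Real.sqrt 2)⁻¹ * Real.sqrt 2 = 1 := inv_mul_cancel₀ (ne_of_gt h2)
  have := sqrt2_gt_one
  unfold vR
  nlinarith [inv_pos.mpr h2]

lemma vv : vC * vC = (2:ℂ)⁻¹ := by
  have h : vR * vR = (2:ℝ)⁻¹ := by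
    unfold vR; rw [← mul_inv, Real.mul_self_sqrt (by norm_num : (0:ℝ) ≤ 2)]
  unfold vC; rw [← Complex.ofReal_mul, h]; norm_num

def co (b : Bool) : ℂ := if b then -1 else 1
def sig (a : Bool) : Matrix (Fin 2) (Fin 2) ℂ := if a then sx else sz
def Hm (b : Bool) : Matrix (Fin 2) (Fin 2) ℂ := !![vC, co b * vC; co b * vC, -vC]
def Ep (b x : Bool) : Matrix (Fin 2) (Fin 2) ℂ := (2:ℂ)⁻¹ • (1 + sgn x • Hm b)

lemma sgn_true : sgn true = 1 := rfl
lemma sgn_false : sgn false = -1 := rfl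

lemma Hm_sq (b : Bool) : Hm b * Hm b = 1 := by
  cases b <;>
    (ext i j
     fin_cases i <;> fin_cases j <;>
       simp [Hm, co, Matrix.mul_apply, Fin.sum_univ_two, Matrix.one_apply] <;>
       (first
          | linear_combination (2:ℂ) * vv
          | linear_combination (-2:ℂ) * vv
          | ring1))

lemma Hm_herm (b : Bool) : (Hm b).IsHermitian := by
  unfold Matrix.IsHermitian
  cases b <;>
    (ext i j
     fin_cases i <;> fin_cases j <;>
       simp [Hm, co, vC, Matrix.conjTranspose_apply, Complex.conj_ofReal])

lemma Ep_mul (b x y : Bool) : Ep b x * Ep b y = if x = y then Ep b x else 0 := by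
  have hH := Hm_sq b
  cases x <;> cases y <;>
    (simp only [Ep, sgn_true, sgn_false, if_true, if_false, Bool.false_eq_true,
       Bool.true_eq_false, reduceIte]
     simp only [smul_mul_smul_comm, add_mul, mul_add, one_mul, mul_one, hH]
     module)

lemma Ep_sum (b : Bool) : (∑ x : Bool, Ep b x) = 1 := by
  rw [Fintype.sum_bool]
  simp only [Ep, sgn_true, sgn_false]
  module

lemma Ep_sgn_sum (b : Bool) : (∑ x : Bool, sgn x • Ep b x) = Hm b := by
  rw [Fintype.sum_bool]
  simp only [Ep, sgn_true, sgn_false]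
  module

lemma Ep_herm (b x : Bool) : (Ep b x).IsHermitian := by
  have h2 : star (sgn x) = sgn x := by cases x <;> simp [sgn]
  have h1 : star ((2:ℂ)⁻¹) = (2:ℂ)⁻¹ := by simp
  unfold Matrix.IsHermitian Ep
  rw [Matrix.conjTranspose_smul, Matrix.conjTranspose_add, Matrix.conjTranspose_smul,
    Matrix.conjTranspose_one, Hm_herm b, h1, h2]

lemma sz_herm : (sz : Matrix (Fin 2) (Fin 2) ℂ).IsHermitian := by
  unfold Matrix.IsHermitian
  ext i j; fin_cases i <;> fin_cases j <;> simp [sz, Matrix.conjTranspose_apply]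

lemma sx_herm : (sx : Matrix (Fin 2) (Fin 2) ℂ).IsHermitian := by
  unfold Matrix.IsHermitian
  ext i j; fin_cases i <;> fin_cases j <;> simp [sx, Matrix.conjTranspose_apply]

lemma sz_sq : sz * sz = (1 : Matrix (Fin 2) (Fin 2) ℂ) := by
  ext i j; fin_cases i <;> fin_cases j <;>
    simp [sz, Matrix.mul_apply, Fin.sum_univ_two, Matrix.one_apply]

lemma sx_sq : sx * sx = (1 : Matrix (Fin 2) (Fin 2) ℂ) := by
  ext i j; fin_cases i <;> fin_cases j <;>
    simp [sx, Matrix.mul_apply, Fin.sum_univ_two, Matrix.one_apply]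

lemma sig_herm (a : Bool) : (sig a).IsHermitian := by cases a <;> simp [sig, sz_herm, sx_herm]

lemma sig_sq (a : Bool) : sig a * sig a = 1 := by cases a <;> simp [sig, sz_sq, sx_sq]

/-! ### onQubit algebra -/

variable {K : Type*} [Fintype K] [DecidableEq K]

lemma onQubit_apply_pos {r : K} {f g : K → Fin 2} (M : Matrix (Fin 2) (Fin 2) ℂ)
    (h : ∀ k', k' ≠ r → f k' = g k') : onQubit r M f g = M (f r) (g r) := by
  unfold onQubit; rw [if_pos h]

lemma onQubit_apply_neg {r : K} {f g : K → Fin 2} (M : Matrix (Fin 2) (Fin 2) ℂ)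
    (h : ¬ ∀ k', k' ≠ r → f k' = g k') : onQubit r M f g = 0 := by
  unfold onQubit; rw [if_neg h]

lemma onQubit_add (r : K) (M N : Matrix (Fin 2) (Fin 2) ℂ) :
    onQubit r (M + N) = onQubit r M + onQubit r N := by
  ext f g
  by_cases h : ∀ k', k' ≠ r → f k' = g k'
  · simp [Matrix.add_apply, onQubit_apply_pos _ h]
  · simp [Matrix.add_apply, onQubit_apply_neg _ h]

lemma onQubit_smul (r : K) (c : ℂ) (M : Matrix (Fin 2) (Fin 2) ℂ) :
    onQubit r (c • M) = c • onQubit r M := by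
  ext f g
  by_cases h : ∀ k', k' ≠ r → f k' = g k'
  · simp [Matrix.smul_apply, onQubit_apply_pos _ h]
  · simp [Matrix.smul_apply, onQubit_apply_neg _ h]

lemma onQubit_zero (r : K) : onQubit r (0 : Matrix (Fin 2) (Fin 2) ℂ) = 0 := by
  ext f g
  by_cases h : ∀ k', k' ≠ r → f k' = g k'
  · simp [onQubit_apply_pos _ h]
  · simp [onQubit_apply_neg _ h]

lemma onQubit_one (r : K) : onQubit r (1 : Matrix (Fin 2) (Fin 2) ℂ) = 1 := by
  ext f g
  by_cases h : ∀ k', k' ≠ r → f k' = g k'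
  · rw [onQubit_apply_pos _ h]
    by_cases h2 : f r = g r
    · have hfg : f = g := funext fun k => by
        by_cases hk : k = r
        · subst hk; exact h2
        · exact h k hk
      simp [Matrix.one_apply, h2, hfg]
    · have hfg : f ≠ g := fun e => h2 (congrFun e r)
      simp [Matrix.one_apply, h2, hfg]
  · rw [onQubit_apply_neg _ h]
    have hfg : f ≠ g := by
      rintro rfl; exact h fun _ _ => rfl
    simp [Matrix.one_apply, hfg]

lemma onQubit_conjTranspose (r : K) (M : Matrix (Fin 2) (Fin 2) ℂ) :
    (onQubit r M)ᴴ = onQubit r Mᴴ := by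
  ext f g
  rw [Matrix.conjTranspose_apply]
  have hsy : (∀ k', k' ≠ r → g k' = f k') ↔ (∀ k', k' ≠ r → f k' = g k') :=
    ⟨fun h k hk => (h k hk).symm, fun h k hk => (h k hk).symm⟩
  by_cases h : ∀ k', k' ≠ r → f k' = g k'
  · rw [onQubit_apply_pos _ (hsy.mpr h), onQubit_apply_pos _ h, Matrix.conjTranspose_apply]
  · rw [onQubit_apply_neg _ (fun hh => h (hsy.mp hh)), onQubit_apply_neg _ h, star_zero]

/-- collapse a sum over functions that vanishes off the `update` fiber -/
lemma sum_update (r : K) (f : K → Fin 2) (F : (K → Fin 2) → ℂ)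
    (h0 : ∀ g, ¬(∀ k', k' ≠ r → f k' = g k') → F g = 0) :
    ∑ g, F g = ∑ a : Fin 2, F (Function.update f r a) := by
  classical
  have himg : Finset.image (Function.update f r) Finset.univ
      = Finset.univ.filter (fun g => ∀ k', k' ≠ r → f k' = g k') := by
    ext g
    simp only [Finset.mem_image, Finset.mem_univ, true_and, Finset.mem_filter]
    constructor
    · rintro ⟨a, rfl⟩ k hk
      simp [Function.update_of_ne hk]
    · intro hg
      refine ⟨g r, funext fun k => ?_⟩
      by_cases hk : k = r
      · subst hk; simp
      · simp [Function.update_of_ne hk, hg k hk]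
  have h1 : ∑ g ∈ Finset.univ.filter (fun g => ∀ k', k' ≠ r → f k' = g k'), F g = ∑ g, F g :=
    Finset.sum_filter_of_ne (fun g _ hF => by
      by_contra hc; exact hF (h0 g hc))
  rw [← h1, ← himg, Finset.sum_image (fun a _ b _ hab => Function.update_injective f r hab)]

lemma onQubit_mul_same (r : K) (M N : Matrix (Fin 2) (Fin 2) ℂ) :
    onQubit r M * onQubit r N = onQubit r (M * N) := by
  ext f g
  rw [Matrix.mul_apply]
  by_cases h : ∀ k', k' ≠ r → f k' = g k'
  · rw [sum_update r f _ (fun g' hg' => by rw [onQubit_apply_neg _ hg', zero_mul])]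
    have hl : ∀ a : Fin 2, onQubit r M f (Function.update f r a) = M (f r) a := fun a => by
      have hc : ∀ k', k' ≠ r → f k' = Function.update f r a k' := fun k hk => by
        simp [Function.update_of_ne hk]
      rw [onQubit_apply_pos _ hc, Function.update_self]
    have hr : ∀ a : Fin 2, onQubit r N (Function.update f r a) g = N a (g r) := fun a => by
      have hc : ∀ k', k' ≠ r → Function.update f r a k' = g k' := fun k hk => by
        simp [Function.update_of_ne hk, h k hk]
      rw [onQubit_apply_pos _ hc, Function.update_self]
    rw [onQubit_apply_pos _ h, Matrix.mul_apply]
    exact Finset.sum_congr rfl fun a _ => by rw [hl a, hr a]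
  · rw [onQubit_apply_neg _ h]
    refine Finset.sum_eq_zero fun g' _ => ?_
    by_cases h1 : ∀ k', k' ≠ r → f k' = g' k'
    · by_cases h2 : ∀ k', k' ≠ r → g' k' = g k'
      · exact absurd (fun k hk => (h1 k hk).trans (h2 k hk)) h
      · rw [onQubit_apply_neg _ h2, mul_zero]
    · rw [onQubit_apply_neg _ h1, zero_mul]

/-- the two-qubit product, in closed form -/
def onTwo (r s : K) (M N : Matrix (Fin 2) (Fin 2) ℂ) :
    Matrix (K → Fin 2) (K → Fin 2) ℂ :=
  fun f g => if ∀ k', k' ≠ r → k' ≠ s → f k' = g k' then M (f r) (g r) * N (f s) (g s) else 0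

lemma onTwo_apply_pos {r s : K} {f g : K → Fin 2} (M N : Matrix (Fin 2) (Fin 2) ℂ)
    (h : ∀ k', k' ≠ r → k' ≠ s → f k' = g k') :
    onTwo r s M N f g = M (f r) (g r) * N (f s) (g s) := by
  unfold onTwo; rw [if_pos h]

lemma onTwo_apply_neg {r s : K} {f g : K → Fin 2} (M N : Matrix (Fin 2) (Fin 2) ℂ)
    (h : ¬ ∀ k', k' ≠ r → k' ≠ s → f k' = g k') :
    onTwo r s M N f g = 0 := by
  unfold onTwo; rw [if_neg h]

lemma onQubit_mul_ne (r s : K) (hrs : r ≠ s) (M N : Matrix (Fin 2) (Fin 2) ℂ) :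
    onQubit r M * onQubit s N = onTwo r s M N := by
  ext f g
  rw [Matrix.mul_apply]
  by_cases h : ∀ k', k' ≠ r → k' ≠ s → f k' = g k'
  · rw [Finset.sum_eq_single (Function.update f r (g r))]
    · have hc1 : ∀ k', k' ≠ r → f k' = Function.update f r (g r) k' := fun k hk => by
        simp [Function.update_of_ne hk]
      have hc2 : ∀ k', k' ≠ s → Function.update f r (g r) k' = g k' := fun k hk => by
        by_cases hkr : k = r
        · subst hkr; simp
        · simp [Function.update_of_ne hkr, h k hkr hk]
      rw [onQubit_apply_pos _ hc1, onQubit_apply_pos _ hc2, onTwo_apply_pos _ _ h,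
        Function.update_self, Function.update_of_ne (Ne.symm hrs)]
    · intro g' _ hne
      by_cases h1 : ∀ k', k' ≠ r → f k' = g' k'
      · by_cases h2 : ∀ k', k' ≠ s → g' k' = g k'
        · exfalso
          apply hne
          funext k
          by_cases hkr : k = r
          · rw [hkr, Function.update_self]
            exact h2 r hrs
          · rw [Function.update_of_ne hkr]
            exact (h1 k hkr).symm
        · rw [onQubit_apply_neg _ h2, mul_zero]
      · rw [onQubit_apply_neg _ h1, zero_mul]
    · intro hmem; exact absurd (Finset.mem_univ _) hmem
  · rw [onTwo_apply_neg _ _ h]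
    refine Finset.sum_eq_zero fun g' _ => ?_
    by_cases h1 : ∀ k', k' ≠ r → f k' = g' k'
    · by_cases h2 : ∀ k', k' ≠ s → g' k' = g k'
      · exact absurd (fun k hkr hks => (h1 k hkr).trans (h2 k hks)) h
      · rw [onQubit_apply_neg _ h2, mul_zero]
    · rw [onQubit_apply_neg _ h1, zero_mul]

lemma onQubit_comm (r s : K) (hrs : r ≠ s) (M N : Matrix (Fin 2) (Fin 2) ℂ) :
    onQubit r M * onQubit s N = onQubit s N * onQubit r M := by
  rw [onQubit_mul_ne r s hrs, onQubit_mul_ne s r hrs.symm]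
  ext f g
  have hiff : (∀ k', k' ≠ r → k' ≠ s → f k' = g k') ↔ (∀ k', k' ≠ s → k' ≠ r → f k' = g k') :=
    ⟨fun h k h1 h2 => h k h2 h1, fun h k h1 h2 => h k h2 h1⟩
  by_cases h : ∀ k', k' ≠ r → k' ≠ s → f k' = g k'
  · rw [onTwo_apply_pos _ _ h, onTwo_apply_pos _ _ (hiff.mp h)]; ring
  · rw [onTwo_apply_neg _ _ h, onTwo_apply_neg _ _ (fun hh => h (hiff.mpr hh))]

/-! ### the maximally entangled state and expectation values -/

variable (K) in
def ment : (K → Fin 2) × (K → Fin 2) → ℂ :=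
  fun p => if p.1 = p.2 then vC ^ (Fintype.card K) else 0

lemma conj_vC : (starRingEnd ℂ) vC = vC := Complex.conj_ofReal _

lemma conj_vCk : (starRingEnd ℂ) (vC ^ (Fintype.card K)) = vC ^ (Fintype.card K) := by
  rw [map_pow, conj_vC]

lemma card_two_mul (r : K) :
    2 * Fintype.card ({j : K // j ≠ r} → Fin 2) = 2 ^ (Fintype.card K) := by
  have h1 : Fintype.card (K → Fin 2)
      = Fintype.card (Fin 2 × ({j : K // j ≠ r} → Fin 2)) :=
    Fintype.card_congr (Equiv.funSplitAt r (Fin 2))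
  rw [Fintype.card_prod, Fintype.card_fin] at h1
  rw [← h1, Fintype.card_fun, Fintype.card_fin]

lemma sum_eval (r : K) (G : Fin 2 → ℂ) :
    ∑ f : K → Fin 2, G (f r)
      = (Fintype.card ({j : K // j ≠ r} → Fin 2) : ℂ) * ∑ a : Fin 2, G a := by
  have h : ∑ f : K → Fin 2, G (f r)
      = ∑ p : Fin 2 × ({j : K // j ≠ r} → Fin 2), G p.1 :=
    Fintype.sum_equiv (Equiv.funSplitAt r (Fin 2)) _ _ (fun f => by
      rw [Equiv.funSplitAt_apply])
  rw [h, Fintype.sum_prod_type]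
  simp only [Finset.sum_const, Finset.card_univ, nsmul_eq_mul]
  rw [Finset.mul_sum]

lemma cinner_kron_ment (A B : Matrix (K → Fin 2) (K → Fin 2) ℂ) :
    cinner (ment K) ((A ⊗ₖ B).mulVec (ment K))
      = (vC ^ Fintype.card K * vC ^ Fintype.card K)
        * ∑ f : K → Fin 2, ∑ g : K → Fin 2, A f g * B f g := by
  classical
  unfold cinner
  have inner : ∀ p : (K → Fin 2) × (K → Fin 2),
      ((A ⊗ₖ B).mulVec (ment K)) p
        = ∑ g : K → Fin 2, A p.1 g * B p.2 g * vC ^ Fintype.card K := by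
    intro p
    show ∑ q, (A ⊗ₖ B) p q * ment K q = _
    rw [Fintype.sum_prod_type]
    refine Finset.sum_congr rfl fun q1 _ => ?_
    simp only [ment, Matrix.kroneckerMap_apply, mul_ite, mul_zero]
    rw [Finset.sum_ite_eq]
    simp
  simp only [inner]
  rw [Fintype.sum_prod_type]
  have outer : ∀ p1 : K → Fin 2, ∑ p2 : K → Fin 2,
      (starRingEnd ℂ) (ment K (p1, p2)) * (∑ g : K → Fin 2, A p1 g * B p2 g * vC ^ Fintype.card K)
      = vC ^ Fintype.card K * ∑ g : K → Fin 2, A p1 g * B p1 g * vC ^ Fintype.card K := by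
    intro p1
    simp only [ment, apply_ite (starRingEnd ℂ), map_zero, conj_vCk, ite_mul, zero_mul]
    rw [Finset.sum_ite_eq]
    simp
  rw [Finset.sum_congr rfl fun p1 _ => outer p1, Finset.mul_sum]
  refine Finset.sum_congr rfl fun f _ => ?_
  rw [Finset.mul_sum, Finset.mul_sum]
  refine Finset.sum_congr rfl fun g _ => ?_
  ring

lemma vCk_mul_half (r : K) :
    (vC ^ Fintype.card K * vC ^ Fintype.card K)
      * (Fintype.card ({j : K // j ≠ r} → Fin 2) : ℂ) = 2⁻¹ := by
  have h1 : vC ^ Fintype.card K * vC ^ Fintype.card K = ((2:ℂ)⁻¹) ^ Fintype.card K := by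
    rw [← mul_pow, vv]
  have h2 := card_two_mul r
  have h3 : ((2:ℕ):ℂ) * ((Fintype.card ({j : K // j ≠ r} → Fin 2) : ℕ) : ℂ)
      = (((2:ℕ) ^ Fintype.card K : ℕ) : ℂ) := by
    rw [← Nat.cast_mul, h2]
  push_cast at h3
  have h4 : ((2:ℂ)⁻¹) ^ Fintype.card K * (2:ℂ) ^ Fintype.card K = 1 := by
    rw [← mul_pow]; norm_num
  rw [h1]
  linear_combination ((2:ℂ)⁻¹ * ((2:ℂ)⁻¹) ^ (Fintype.card K)) * h3 + (2:ℂ)⁻¹ * h4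

lemma cinner_same (r : K) (M N : Matrix (Fin 2) (Fin 2) ℂ) :
    cinner (ment K) ((onQubit r M ⊗ₖ onQubit r N).mulVec (ment K))
      = 2⁻¹ * ∑ b : Fin 2, ∑ a : Fin 2, M b a * N b a := by
  rw [cinner_kron_ment]
  have step1 : ∀ f : K → Fin 2, ∑ g : K → Fin 2, onQubit r M f g * onQubit r N f g
      = ∑ a : Fin 2, M (f r) a * N (f r) a := fun f => by
    rw [sum_update r f _ (fun g hg => by rw [onQubit_apply_neg _ hg, zero_mul])]
    refine Finset.sum_congr rfl fun a _ => ?_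
    have hc : ∀ k', k' ≠ r → f k' = Function.update f r a k' := fun k hk => by
      simp [Function.update_of_ne hk]
    rw [onQubit_apply_pos _ hc, onQubit_apply_pos _ hc, Function.update_self]
  rw [Finset.sum_congr rfl fun f _ => step1 f]
  rw [sum_eval r (fun b => ∑ a : Fin 2, M b a * N b a)]
  rw [← mul_assoc, vCk_mul_half r]

lemma cinner_left_one (r : K) (M : Matrix (Fin 2) (Fin 2) ℂ) :
    cinner (ment K) ((onQubit r M ⊗ₖ (1 : Matrix (K → Fin 2) (K → Fin 2) ℂ)).mulVec (ment K))
      = 2⁻¹ * ∑ b : Fin 2, M b b := by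
  rw [cinner_kron_ment]
  have step1 : ∀ f : K → Fin 2, ∑ g : K → Fin 2, onQubit r M f g * (1 : Matrix (K → Fin 2) (K → Fin 2) ℂ) f g
      = M (f r) (f r) := fun f => by
    simp only [Matrix.one_apply, mul_ite, mul_one, mul_zero]
    rw [Finset.sum_ite_eq]
    simp [onQubit_apply_pos _ (fun k _ => rfl)]
  rw [Finset.sum_congr rfl fun f _ => step1 f]
  rw [sum_eval r (fun b => M b b), ← mul_assoc, vCk_mul_half r]

lemma cinner_right_one (r : K) (N : Matrix (Fin 2) (Fin 2) ℂ) :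
    cinner (ment K) (((1 : Matrix (K → Fin 2) (K → Fin 2) ℂ) ⊗ₖ onQubit r N).mulVec (ment K))
      = 2⁻¹ * ∑ b : Fin 2, N b b := by
  rw [cinner_kron_ment]
  have step1 : ∀ f : K → Fin 2, ∑ g : K → Fin 2, (1 : Matrix (K → Fin 2) (K → Fin 2) ℂ) f g * onQubit r N f g
      = N (f r) (f r) := fun f => by
    simp only [Matrix.one_apply, ite_mul, one_mul, zero_mul]
    rw [Finset.sum_ite_eq]
    simp [onQubit_apply_pos _ (fun k _ => rfl)]
  rw [Finset.sum_congr rfl fun f _ => step1 f]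
  rw [sum_eval r (fun b => N b b), ← mul_assoc, vCk_mul_half r]

lemma vvR : vR * vR = (2:ℝ)⁻¹ := by
  unfold vR; rw [← mul_inv, Real.mul_self_sqrt (by norm_num : (0:ℝ) ≤ 2)]

lemma norm_vC_sq : ‖vC‖ ^ 2 = (2:ℝ)⁻¹ := by
  unfold vC
  rw [Complex.norm_real, Real.norm_eq_abs, abs_of_nonneg vR_pos.le, sq, vvR]

lemma cnorm_ment : cnorm (ment K) = 1 := by
  unfold cnorm
  have h : ∀ p : (K → Fin 2) × (K → Fin 2),
      ‖ment K p‖ ^ 2 = if p.1 = p.2 then ((2:ℝ)⁻¹) ^ Fintype.card K else 0 := by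
    intro p
    unfold ment
    split_ifs
    · rw [norm_pow, ← pow_mul, mul_comm, pow_mul, norm_vC_sq]
    · simp
  have hsum : ∑ p : (K → Fin 2) × (K → Fin 2), ‖ment K p‖ ^ 2 = 1 := by
    rw [Finset.sum_congr rfl fun p _ => h p, Fintype.sum_prod_type]
    have hinner : ∀ f : K → Fin 2,
        (∑ g : K → Fin 2, if f = g then ((2:ℝ)⁻¹) ^ Fintype.card K else 0)
          = ((2:ℝ)⁻¹) ^ Fintype.card K := fun f => by
      rw [Finset.sum_ite_eq]; simp
    rw [Finset.sum_congr rfl fun f _ => hinner f, Finset.sum_const, Finset.card_univ,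
      Fintype.card_fun, Fintype.card_fin, nsmul_eq_mul]
    push_cast
    rw [← mul_pow]
    norm_num
  rw [hsum, Real.sqrt_one]

/-! ### expectation values of the strategy observables -/

lemma val_omega1 (r : K) (a : Bool) :
    cinner (ment K) ((onQubit r (sig a) ⊗ₖ onQubit r (sig a)).mulVec (ment K)) = 1 := by
  rw [cinner_same]
  cases a <;>
    norm_num [sig, sz, sx, Fin.sum_univ_two]

lemma val_good (r : K) (a b : Bool) :
    cinner (ment K) ((onQubit r (sig a) ⊗ₖ onQubit r (Hm b)).mulVec (ment K))
      = ((if a && b then -vR else vR : ℝ) : ℂ) := by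
  rw [cinner_same]
  cases a <;> cases b <;>
    (norm_num [sig, sz, sx, Hm, co, vC, Fin.sum_univ_two] <;> push_cast <;> ring)

lemma val_goodA (r : K) (a b : Bool) :
    cinner (ment K) ((onQubit r (Hm b) ⊗ₖ onQubit r (sig a)).mulVec (ment K))
      = ((if a && b then -vR else vR : ℝ) : ℂ) := by
  rw [cinner_same]
  cases a <;> cases b <;>
    (norm_num [sig, sz, sx, Hm, co, vC, Fin.sum_univ_two] <;> push_cast <;> ring)

lemma val_coll (r : K) (a : Bool) :
    cinner (ment K)
      ((onQubit r (sig a) ⊗ₖ (1 : Matrix (K → Fin 2) (K → Fin 2) ℂ)).mulVec (ment K)) = 0 := by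
  rw [cinner_left_one]
  cases a <;> norm_num [sig, sz, sx, Fin.sum_univ_two]

lemma val_collA (r : K) (a : Bool) :
    cinner (ment K)
      (((1 : Matrix (K → Fin 2) (K → Fin 2) ℂ) ⊗ₖ onQubit r (sig a)).mulVec (ment K)) = 0 := by
  rw [cinner_right_one]
  cases a <;> norm_num [sig, sz, sx, Fin.sum_univ_two]

lemma refl_onQubit_sig (r : K) (a : Bool) : IsReflection (onQubit r (sig a)) := by
  constructor
  · show (onQubit r (sig a))ᴴ = onQubit r (sig a)
    rw [onQubit_conjTranspose]
    have h : (sig a)ᴴ = sig a := sig_herm a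
    rw [h]
  · rw [onQubit_mul_same, sig_sq, onQubit_one]

/-! ### measurements -/

def PiTriv {ι : Type*} [Fintype ι] [DecidableEq ι] (x y : Bool) : Matrix ι ι ℂ :=
  if x && y then 1 else 0

lemma ProjMeas_triv {ι : Type*} [Fintype ι] [DecidableEq ι] :
    ProjMeas (PiTriv (ι := ι)) := by
  refine ⟨?_, ?_, ?_⟩
  · intro x y
    cases x <;> cases y <;>
      simp [PiTriv, Matrix.isHermitian_one, Matrix.isHermitian_zero]
  · intro x y x' y' hne
    cases x <;> cases y <;> cases x' <;> cases y' <;> simp_all [PiTriv]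
  · rw [Fintype.sum_bool, Fintype.sum_bool, Fintype.sum_bool]
    simp [PiTriv]

lemma PiTriv_sumX {ι : Type*} [Fintype ι] [DecidableEq ι] :
    (∑ x : Bool, ∑ y : Bool, sgn x • PiTriv (ι := ι) x y) = 1 := by
  simp [Fintype.sum_bool, PiTriv, sgn_true, sgn_false]

lemma PiTriv_sumY {ι : Type*} [Fintype ι] [DecidableEq ι] :
    (∑ x : Bool, ∑ y : Bool, sgn y • PiTriv (ι := ι) x y) = 1 := by
  simp [Fintype.sum_bool, PiTriv, sgn_true, sgn_false]

def PiG (r s : K) (b c x y : Bool) : Matrix (K → Fin 2) (K → Fin 2) ℂ :=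
  onQubit r (Ep b x) * onQubit s (Ep c y)

lemma PiG_mul (r s : K) (hrs : r ≠ s) (b c x y x' y' : Bool) :
    PiG r s b c x y * PiG r s b c x' y'
      = onQubit r (Ep b x * Ep b x') * onQubit s (Ep c y * Ep c y') := by
  unfold PiG
  rw [mul_assoc, ← mul_assoc (onQubit s (Ep c y)), onQubit_comm s r hrs.symm,
    mul_assoc (onQubit r (Ep b x')), ← mul_assoc, onQubit_mul_same, onQubit_mul_same]

lemma sum_Ep_onQubit (r : K) (b : Bool) : (∑ x : Bool, onQubit r (Ep b x)) = 1 := by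
  rw [Fintype.sum_bool, ← onQubit_add]
  have h : Ep b true + Ep b false = 1 := by
    rw [← Fintype.sum_bool (fun x => Ep b x)]; exact Ep_sum b
  rw [h, onQubit_one]

lemma sum_sgn_Ep_onQubit (r : K) (b : Bool) :
    (∑ x : Bool, sgn x • onQubit r (Ep b x)) = onQubit r (Hm b) := by
  have h : ∀ x, sgn x • onQubit r (Ep b x) = onQubit r (sgn x • Ep b x) := fun x =>
    (onQubit_smul r (sgn x)

 (Ep b x)).symm
  rw [Finset.sum_congr rfl fun x _ => h x, Fintype.sum_bool, ← onQubit_add]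
  have h2 : sgn true • Ep b true + sgn false • Ep b false = Hm b := by
    rw [← Fintype.sum_bool (fun x => sgn x • Ep b x)]; exact Ep_sgn_sum b
  rw [h2]

lemma ProjMeas_PiG (r s : K) (hrs : r ≠ s) (b c : Bool) :
    ProjMeas (PiG r s b c) := by
  refine ⟨?_, ?_, ?_⟩
  · intro x y
    constructor
    · show (PiG r s b c x y)ᴴ = PiG r s b c x y
      unfold PiG
      have hE1 : (Ep b x)ᴴ = Ep b x := Ep_herm b x
      have hE2 : (Ep c y)ᴴ = Ep c y := Ep_herm c y
      rw [Matrix.conjTranspose_mul, onQubit_conjTranspose, onQubit_conjTranspose, hE1, hE2,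
        onQubit_comm s r hrs.symm]
    · rw [PiG_mul r s hrs, Ep_mul, Ep_mul, if_pos rfl, if_pos rfl]
      rfl
  · intro x y x' y' hne
    rw [PiG_mul r s hrs, Ep_mul, Ep_mul]
    by_cases hx : x = x'
    · have hy : ¬ y = y' := fun hy => hne (by rw [hx, hy])
      rw [if_pos hx, if_neg hy, onQubit_zero, mul_zero]
    · rw [if_neg hx, onQubit_zero, zero_mul]
  · simp only [PiG]
    rw [← Finset.sum_mul_sum, sum_Ep_onQubit, sum_Ep_onQubit, one_mul]

lemma PiG_sumX (r s : K) (hrs : r ≠ s) (b c : Bool) :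
    (∑ x : Bool, ∑ y : Bool, sgn x • PiG r s b c x y) = onQubit r (Hm b) := by
  have h1 : ∀ x : Bool, (∑ y : Bool, sgn x • PiG r s b c x y)
      = sgn x • onQubit r (Ep b x) := fun x => by
    unfold PiG
    rw [← Finset.smul_sum, ← Finset.mul_sum, sum_Ep_onQubit, mul_one]
  rw [Finset.sum_congr rfl fun x _ => h1 x]
  exact sum_sgn_Ep_onQubit r b

lemma PiG_sumY (r s : K) (hrs : r ≠ s) (b c : Bool) :
    (∑ x : Bool, ∑ y : Bool, sgn y • PiG r s b c x y) = onQubit s (Hm c) := by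
  have h1 : ∀ x : Bool, (∑ y : Bool, sgn y • PiG r s b c x y)
      = onQubit r (Ep b x) * onQubit s (Hm c) := fun x => by
    unfold PiG
    have h2 : ∀ y : Bool, sgn y • (onQubit r (Ep b x) * onQubit s (Ep c y))
        = onQubit r (Ep b x) * (sgn y • onQubit s (Ep c y)) := fun y =>
      (mul_smul_comm _ _ _).symm
    rw [Finset.sum_congr rfl fun y _ => h2 y, ← Finset.mul_sum, sum_sgn_Ep_onQubit]
  rw [Finset.sum_congr rfl fun x _ => h1 x, ← Finset.sum_mul, sum_Ep_onQubit, one_mul]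

/-! ### transport along an equivalence of index types -/

section Transport

variable {ι τ : Type*} [Fintype ι] [DecidableEq ι] [Fintype τ] [DecidableEq τ]

def pb (e : ι ≃ τ) (M : Matrix ι ι ℂ) : Matrix τ τ ℂ := M.submatrix e.symm e.symm

def pv (e : ι ≃ τ) (ψ : ι × ι → ℂ) : τ × τ → ℂ := fun p => ψ (e.symm p.1, e.symm p.2)

lemma pb_mul (e : ι ≃ τ) (M N : Matrix ι ι ℂ) : pb e M * pb e N = pb e (M * N) :=
  Matrix.submatrix_mul_equiv M N _ e.symm _

lemma pb_one (e : ι ≃ τ) : pb e (1 : Matrix ι ι ℂ) = 1 :=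
  Matrix.submatrix_one_equiv e.symm

lemma pb_zero (e : ι ≃ τ) : pb e (0 : Matrix ι ι ℂ) = 0 := by
  ext i j; simp [pb]

lemma pb_ct (e : ι ≃ τ) (M : Matrix ι ι ℂ) : (pb e M)ᴴ = pb e Mᴴ :=
  Matrix.conjTranspose_submatrix M _ _

lemma pb_smul (e : ι ≃ τ) (c : ℂ) (M : Matrix ι ι ℂ) : pb e (c • M) = c • pb e M := by
  ext i j; simp [pb]

lemma pb_sum (e : ι ≃ τ) {γ : Type*} (s : Finset γ) (f : γ → Matrix ι ι ℂ) :
    pb e (∑ x ∈ s, f x) = ∑ x ∈ s, pb e (f x) := by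
  ext i j; simp [pb, Matrix.sum_apply]

lemma pb_refl (e : ι ≃ τ) (M : Matrix ι ι ℂ) (h : IsReflection M) : IsReflection (pb e M) := by
  obtain ⟨h1, h2⟩ := h
  constructor
  · show (pb e M)ᴴ = pb e M
    rw [pb_ct]
    have h1' : Mᴴ = M := h1
    rw [h1']
  · rw [pb_mul, h2, pb_one]

lemma pb_projMeas (e : ι ≃ τ) (Pi : Bool → Bool → Matrix ι ι ℂ) (h : ProjMeas Pi) :
    ProjMeas (fun x y => pb e (Pi x y)) := by
  obtain ⟨h1, h2, h3⟩ := h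
  refine ⟨fun x y => ?_, fun x y x' y' hne => ?_, ?_⟩
  · obtain ⟨ha, hb⟩ := h1 x y
    constructor
    · show (pb e (Pi x y))ᴴ = pb e (Pi x y)
      rw [pb_ct]
      have ha' : (Pi x y)ᴴ = Pi x y := ha
      rw [ha']
    · rw [pb_mul, hb]
  · rw [pb_mul, h2 x y x' y' hne, pb_zero]
  · have hx : ∀ x : Bool, (∑ y : Bool, pb e (Pi x y)) = pb e (∑ y : Bool, Pi x y) :=
      fun x => (pb_sum e Finset.univ (fun y => Pi x y)).symm
    rw [Finset.sum_congr rfl fun x _ => hx x, ← pb_sum, h3, pb_one]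

lemma pv_cnorm (e : ι ≃ τ) (ψ : ι × ι → ℂ) : cnorm (pv e ψ) = cnorm ψ := by
  unfold cnorm
  congr 1
  exact (Fintype.sum_equiv (e.prodCongr e) _ _ (fun p => by
    simp [pv, Equiv.prodCongr_apply, Prod.map])).symm

lemma pv_cinner (e : ι ≃ τ) (M N : Matrix ι ι ℂ) (ψ : ι × ι → ℂ) :
    cinner (pv e ψ) ((pb e M ⊗ₖ pb e N).mulVec (pv e ψ))
      = cinner ψ ((M ⊗ₖ N).mulVec ψ) := by
  unfold cinner
  refine (Fintype.sum_equiv (e.prodCongr e) _ _ (fun p => ?_)).symm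
  have hv : pv e ψ ((e.prodCongr e) p) = ψ p := by
    simp [pv, Equiv.prodCongr_apply, Prod.map]
  have hmv : ((pb e M ⊗ₖ pb e N).mulVec (pv e ψ)) ((e.prodCongr e) p)
      = ((M ⊗ₖ N).mulVec ψ) p := by
    show ∑ q, _ = ∑ q, _
    refine (Fintype.sum_equiv (e.prodCongr e) _ _ (fun q => ?_)).symm
    simp [pb, pv, Matrix.kroneckerMap_apply, Matrix.submatrix_apply,
      Equiv.prodCongr_apply, Prod.map]
  rw [hv, hmv]

lemma accProb_pb (e : ι ≃ τ) (n : ℕ)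
    (XA ZA XB ZB : Fin n → Matrix ι ι ℂ)
    (RA RB : Fin n → Bool → Fin n → Bool → Matrix ι ι ℂ)
    (ψ : ι × ι → ℂ) :
    accProb n (fun i => pb e (XA i)) (fun i => pb e (ZA i)) (fun i => pb e (XB i))
      (fun i => pb e (ZB i)) (fun i b j c => pb e (RA i b j c))
      (fun i b j c => pb e (RB i b j c)) (pv e ψ)
      = accProb n XA ZA XB ZB RA RB ψ := by
  unfold accProb
  have hite : ∀ (a : Bool) (M N : Matrix ι ι ℂ),
      (if a then pb e M else pb e N) = pb e (if a then M else N) := by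
    intro a M N; cases a <;> rfl
  simp only [hite, pv_cinner e]

end Transport

/-! ### the concrete strategy on `Fin (2^k)` -/

def eqk (k : ℕ) : (Fin k → Fin 2) ≃ Fin (2^k) := finFunctionFinEquiv

variable {n k : ℕ}

def XAs (hs : Fin n → Fin k) (i : Fin n) : Matrix (Fin (2^k)) (Fin (2^k)) ℂ :=
  pb (eqk k) (onQubit (hs i) sx)

def ZAs (hs : Fin n → Fin k) (i : Fin n) : Matrix (Fin (2^k)) (Fin (2^k)) ℂ :=
  pb (eqk k) (onQubit (hs i) sz)

def Rls (hs : Fin n → Fin k) (i : Fin n) (b : Bool) (j : Fin n) (c : Bool) :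
    Matrix (Fin (2^k)) (Fin (2^k)) ℂ :=
  pb (eqk k) (if hs i = hs j then 1 else onQubit (hs i) (Hm b))

def Pils (hs : Fin n → Fin k) (i j : Fin n) (b c x y : Bool) :
    Matrix (Fin (2^k)) (Fin (2^k)) ℂ :=
  pb (eqk k) (if hs i = hs j then PiTriv x y else PiG (hs i) (hs j) b c x y)

def psis (k : ℕ) : Fin (2^k) × Fin (2^k) → ℂ := pv (eqk k) (ment (Fin k))

lemma strat_valid (hs : Fin n → Fin k) :
    StratValid n (XAs hs) (ZAs hs) (XAs hs) (ZAs hs) (Pils hs) (Pils hs) (psis k) := by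
  refine ⟨?_, ?_, ?_, ?_⟩
  · unfold psis
    rw [pv_cnorm, cnorm_ment]
  · intro i
    have hx : IsReflection (XAs hs i) :=
      pb_refl _ _ (by simpa [sig] using refl_onQubit_sig (hs i) true)
    have hz : IsReflection (ZAs hs i) :=
      pb_refl _ _ (by simpa [sig] using refl_onQubit_sig (hs i) false)
    exact ⟨hx, hz, hx, hz⟩
  all_goals
    intro i j hij b c
    unfold Pils
    apply pb_projMeas
    by_cases hcol : hs i = hs j
    · simp only [if_pos hcol]
      exact ProjMeas_triv
    · simp only [if_neg hcol]
      exact ProjMeas_PiG _ _ hcol b c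

lemma pb_weighted_sum (w : Bool → Bool → ℂ) (Pi : Bool → Bool → Matrix (Fin k → Fin 2) (Fin k → Fin 2) ℂ) :
    (∑ x : Bool, ∑ y : Bool, w x y • pb (eqk k) (Pi x y))
      = pb (eqk k) (∑ x : Bool, ∑ y : Bool, w x y • Pi x y) := by
  have hx : ∀ x : Bool, (∑ y : Bool, w x y • pb (eqk k) (Pi x y))
      = pb (eqk k) (∑ y : Bool, w x y • Pi x y) := fun x => by
    rw [pb_sum]
    exact Finset.sum_congr rfl fun y _ => (pb_smul _ _ _).symm
  rw [Finset.sum_congr rfl fun x _ => hx x, ← pb_sum]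

lemma strat_rchar (hs : Fin n → Fin k) : RChar (Pils hs) (Rls hs) := by
  intro i j hij b c
  constructor
  · unfold Rls Pils
    rw [pb_weighted_sum (fun x y => sgn x)]
    apply congrArg
    by_cases hcol : hs i = hs j
    · simp only [if_pos hcol]
      exact PiTriv_sumX.symm
    · simp only [if_neg hcol]
      exact (PiG_sumX _ _ hcol b c).symm
  · unfold Rls Pils
    rw [pb_weighted_sum (fun x y => sgn y)]
    apply congrArg
    by_cases hcol : hs i = hs j
    · simp only [if_pos hcol, if_pos hcol.symm]
      exact PiTriv_sumY.symm
    · simp only [if_neg hcol, if_neg (fun hh => hcol (Eq.symm hh))]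
      exact (PiG_sumY _ _ hcol b c).symm

/-! ### evaluating the acceptance probability -/

lemma innerB_val (r s : K) :
    (∑ a : Bool, ∑ b : Bool, ∑ c : Bool,
      (1 + (if a && b then (-1:ℝ) else 1) *
        (cinner (ment K) ((onQubit r (sig a) ⊗ₖ
          (if r = s then (1 : Matrix (K → Fin 2) (K → Fin 2) ℂ) else onQubit r (Hm b))).mulVec
          (ment K))).re) / 2)
    = if r = s then 4 else 4 + 4*vR := by
  by_cases hcol : r = s
  · simp only [if_pos hcol, val_coll, Complex.zero_re, mul_zero, add_zero]
    simp [Fintype.sum_bool]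
    norm_num
  · simp only [if_neg hcol, val_good, Complex.ofReal_re]
    simp [Fintype.sum_bool]
    ring

lemma innerA_val (r s : K) :
    (∑ a : Bool, ∑ b : Bool, ∑ c : Bool,
      (1 + (if a && b then (-1:ℝ) else 1) *
        (cinner (ment K) (((if r = s then (1 : Matrix (K → Fin 2) (K → Fin 2) ℂ)
            else onQubit r (Hm b)) ⊗ₖ onQubit r (sig a)).mulVec
          (ment K))).re) / 2)
    = if r = s then 4 else 4 + 4*vR := by
  by_cases hcol : r = s
  · simp only [if_pos hcol, val_collA, Complex.zero_re, mul_zero, add_zero]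
    simp [Fintype.sum_bool]
    norm_num
  · simp only [if_neg hcol, val_goodA, Complex.ofReal_re]
    simp [Fintype.sum_bool]
    ring

lemma double_sum_formula {n : ℕ} (g : Fin n → Fin n → Prop) [∀ i j, Decidable (g i j)]
    (C D : ℝ) :
    (∑ i : Fin n, ∑ j : Fin n, if i = j then (0:ℝ) else if g i j then C else D)
      = ((n:ℝ)^2 - n) * D
        - (∑ i : Fin n, ∑ j : Fin n, if ¬ i = j ∧ g i j then (1:ℝ) else 0) * (D - C) := by
  have hpt : ∀ i j, (if i = j then (0:ℝ) else if g i j then C else D)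
      = (if i = j then (0:ℝ) else D)
        - (if ¬ i = j ∧ g i j then (1:ℝ) else 0) * (D - C) := by
    intro i j
    by_cases hij : i = j
    · simp [hij]
    · by_cases hg : g i j <;> simp [hij, hg] <;> ring
  have hA : (∑ i : Fin n, ∑ j : Fin n, if i = j then (0:ℝ) else D) = ((n:ℝ)^2 - n) * D := by
    have hrow : ∀ i : Fin n, (∑ j : Fin n, if i = j then (0:ℝ) else D) = (n:ℝ) * D - D := by
      intro i
      have hpt2 : ∀ j : Fin n, (if i = j then (0:ℝ) else D) = D - (if i = j then D else 0) := by
        intro j; by_cases hij : i = j <;> simp [hij]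
      rw [Finset.sum_congr rfl fun j _ => hpt2 j, Finset.sum_sub_distrib, Finset.sum_const,
        Finset.sum_ite_eq, Finset.card_univ, Fintype.card_fin, nsmul_eq_mul]
      simp
    rw [Finset.sum_congr rfl fun i _ => hrow i, Finset.sum_const, Finset.card_univ,
      Fintype.card_fin, nsmul_eq_mul]
    ring
  rw [Finset.sum_congr rfl fun i _ => Finset.sum_congr rfl fun j _ => hpt i j]
  rw [Finset.sum_congr rfl fun i _ => Finset.sum_sub_distrib _ _, Finset.sum_sub_distrib, hA]
  congr 1
  rw [Finset.sum_mul]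
  exact Finset.sum_congr rfl fun i _ => (Finset.sum_mul _ _ _).symm

lemma accProb_eval (hs : Fin n → Fin k) (hn : 2 ≤ n) :
    accProb n (XAs hs) (ZAs hs) (XAs hs) (ZAs hs) (Rls hs) (Rls hs) (psis k)
      = 1/3 * (1 + 2 * ((1 / (8*(n:ℝ)*((n:ℝ)-1))) *
          (((n:ℝ)^2 - (n:ℝ)) * (4+4*vR)
            - (∑ i : Fin n, ∑ j : Fin n, if ¬ i = j ∧ hs i = hs j then (1:ℝ) else 0)
              * (4*vR)))) := by
  have heq : accProb n (XAs hs) (ZAs hs) (XAs hs) (ZAs hs) (Rls hs) (Rls hs) (psis k)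
      = accProb n (fun i => onQubit (hs i) sx) (fun i => onQubit (hs i) sz)
          (fun i => onQubit (hs i) sx) (fun i => onQubit (hs i) sz)
          (fun i b j c => if hs i = hs j then 1 else onQubit (hs i) (Hm b))
          (fun i b j c => if hs i = hs j then 1 else onQubit (hs i) (Hm b))
          (ment (Fin k)) :=
    accProb_pb (eqk k) n _ _ _ _ _ _ _
  rw [heq]
  unfold accProb
  have hsig : ∀ (r : Fin k) (a : Bool),
      (if a then onQubit r sx else onQubit r sz) = onQubit r (sig a) := fun r a => by
    cases a <;> rfl
  simp only [hsig, val_omega1, Complex.one_re, innerB_val, innerA_val]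
  rw [double_sum_formula (fun i j => hs i = hs j) 4 (4+4*vR)]
  have hone : (∑ _i : Fin n, ∑ _a : Bool, ((1:ℝ) + 1) / 2) = (n:ℝ) * 2 := by
    simp [Fintype.sum_bool]
  rw [hone]
  have hn0 : (n:ℝ) ≠ 0 := by
    have : (0:ℝ) < n := by exact_mod_cast Nat.lt_of_lt_of_le (by norm_num) hn
    linarith
  have hn1 : (n:ℝ) - 1 ≠ 0 := by
    have : (2:ℝ) ≤ n := by exact_mod_cast hn
    linarith
  field_simp
  ring

/-! ### the hash function and the collision bound -/

def hashf (n k : ℕ) (hk : 0 < k) : Fin n → Fin k :=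
  fun i => ⟨(i : ℕ) % k, Nat.mod_lt _ hk⟩

lemma Nc_bound (n k : ℕ) (hk : 0 < k) (hn : 2 ≤ n) :
    (∑ i : Fin n, ∑ j : Fin n,
      if ¬ i = j ∧ hashf n k hk i = hashf n k hk j then (1:ℝ) else 0)
      ≤ (n:ℝ) * (((n:ℝ) - 1) / k) := by
  have hrow : ∀ i : Fin n,
      (∑ j : Fin n, if ¬ i = j ∧ hashf n k hk i = hashf n k hk j then (1:ℝ) else 0)
        ≤ ((n:ℝ) - 1) / k := by
    intro i
    rw [Finset.sum_boole]
    have hcard : (Finset.univ.filter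
        (fun j : Fin n => ¬ i = j ∧ hashf n k hk i = hashf n k hk j)).card
          ≤ (n-1)/k := by
      set t := Finset.univ.filter (fun j : Fin n => (j:ℕ) % k = (i:ℕ) % k) with ht
      have hit : i ∈ t := by simp [ht]
      have hsub : Finset.univ.filter
          (fun j : Fin n => ¬ i = j ∧ hashf n k hk i = hashf n k hk j) ⊆ t.erase i := by
        intro j hj
        rw [Finset.mem_filter] at hj
        obtain ⟨-, hne, hh⟩ := hj
        rw [Finset.mem_erase]
        refine ⟨fun h => hne h.symm, ?_⟩
        simp only [ht, Finset.mem_filter, Finset.mem_univ, true_and]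
        have hvv : (i:ℕ) % k = (j:ℕ) % k := congrArg Fin.val hh
        exact hvv.symm
      have hmap : ∀ j ∈ t, (j:ℕ)/k ∈ Finset.range ((n-1)/k + 1) := by
        intro j hj
        rw [Finset.mem_range, Nat.lt_succ_iff]
        exact Nat.div_le_div_right (Nat.le_sub_one_of_lt j.isLt)
      have hinj : Set.InjOn (fun j : Fin n => (j:ℕ)/k) ↑t := by
        intro j1 hj1 j2 hj2 hdiv
        have h1 : (j1:ℕ) % k = (i:ℕ) % k := (Finset.mem_filter.1 (Finset.mem_coe.1 hj1)).2
        have h2 : (j2:ℕ) % k = (i:ℕ) % k := (Finset.mem_filter.1 (Finset.mem_coe.1 hj2)).2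
        have hdiv' : (j1:ℕ)/k = (j2:ℕ)/k := by simpa using hdiv
        apply Fin.ext
        calc (j1:ℕ) = k * ((j1:ℕ)/k) + (j1:ℕ)%k := (Nat.div_add_mod _ _).symm
          _ = k * ((j2:ℕ)/k) + (j2:ℕ)%k := by rw [hdiv', h1, h2]
          _ = (j2:ℕ) := Nat.div_add_mod _ _
      have hcardt : t.card ≤ (n-1)/k + 1 := by
        have h := Finset.card_le_card_of_injOn _ hmap hinj
        simpa [Finset.card_range] using h
      calc (Finset.univ.filter
          (fun j : Fin n => ¬ i = j ∧ hashf n k hk i = hashf n k hk j)).card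
          ≤ (t.erase i).card := Finset.card_le_card hsub
        _ = t.card - 1 := Finset.card_erase_of_mem hit
        _ ≤ (n-1)/k := Nat.sub_le_of_le_add hcardt
    calc ((Finset.univ.filter
        (fun j : Fin n => ¬ i = j ∧ hashf n k hk i = hashf n k hk j)).card : ℝ)
        ≤ (((n-1)/k : ℕ) : ℝ) := by exact_mod_cast hcard
      _ ≤ ((n-1 : ℕ) : ℝ)/(k:ℝ) := Nat.cast_div_le
      _ = ((n:ℝ)-1)/k := by
          rw [Nat.cast_sub (by omega : 1 ≤ n)]
          norm_num
  calc (∑ i : Fin n, ∑ j : Fin n,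
      if ¬ i = j ∧ hashf n k hk i = hashf n k hk j then (1:ℝ) else 0)
      ≤ ∑ _i : Fin n, ((n:ℝ) - 1) / k := Finset.sum_le_sum (fun i _ => hrow i)
    _ = (n:ℝ) * (((n:ℝ)-1)/k) := by
        rw [Finset.sum_const, Finset.card_univ, Fintype.card_fin, nsmul_eq_mul]

/-! ### omegaOpt in closed form -/

lemma vR_eq : vR = Real.sqrt 2 / 2 := by
  have h : Real.sqrt 2 * Real.sqrt 2 = 2 := Real.mul_self_sqrt (by norm_num)
  have h0 := sqrt2_pos
  unfold vR
  rw [eq_div_iff (by norm_num : (2:ℝ) ≠ 0), inv_mul_eq_div, div_eq_iff (ne_of_gt h0)]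
  linarith

lemma omegaOpt_eq : omegaOpt = (2 + vR)/3 := by
  unfold omegaOpt
  rw [Real.cos_pi_div_eight]
  have h1 : (Real.sqrt (2 + Real.sqrt 2) / 2)^2 = (2 + Real.sqrt 2)/4 := by
    rw [div_pow, Real.sq_sqrt (by positivity)]
    norm_num
  rw [h1, vR_eq]
  ring

/-! ### the trivial one-dimensional strategy -/

lemma sum_offdiag {n : ℕ} (D : ℝ) :
    (∑ i : Fin n, ∑ j : Fin n, if i = j then (0:ℝ) else D) = ((n:ℝ)^2 - n) * D := by
  have hrow : ∀ i : Fin n, (∑ j : Fin n, if i = j then (0:ℝ) else D) = (n:ℝ) * D - D := by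
    intro i
    have hpt2 : ∀ j : Fin n, (if i = j then (0:ℝ) else D) = D - (if i = j then D else 0) := by
      intro j; by_cases hij : i = j <;> simp [hij]
    rw [Finset.sum_congr rfl fun j _ => hpt2 j, Finset.sum_sub_distrib, Finset.sum_const,
      Finset.sum_ite_eq, Finset.card_univ, Fintype.card_fin, nsmul_eq_mul]
    simp
  rw [Finset.sum_congr rfl fun i _ => hrow i, Finset.sum_const, Finset.card_univ,
    Fintype.card_fin, nsmul_eq_mul]
  ring

lemma refl_one1 : IsReflection (1 : Matrix (Fin 1) (Fin 1) ℂ) :=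
  ⟨Matrix.isHermitian_one, by rw [one_mul]⟩

lemma cnorm_one1 : cnorm (fun _ : Fin 1 × Fin 1 => (1:ℂ)) = 1 := by
  unfold cnorm
  simp

lemma cinner_one1 :
    cinner (fun _ : Fin 1 × Fin 1 => (1:ℂ))
      (((1 : Matrix (Fin 1) (Fin 1) ℂ) ⊗ₖ (1 : Matrix (Fin 1) (Fin 1) ℂ)).mulVec
        (fun _ => (1:ℂ))) = 1 := by
  rw [Matrix.one_kronecker_one, Matrix.one_mulVec]
  unfold cinner
  simp

lemma accProb_one (n : ℕ) (hn : 2 ≤ n) :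
    accProb n (fun _ : Fin n => (1 : Matrix (Fin 1) (Fin 1) ℂ)) (fun _ => 1)
      (fun _ : Fin n => (1 : Matrix (Fin 1) (Fin 1) ℂ)) (fun _ => 1)
      (fun _ _ _ _ => (1 : Matrix (Fin 1) (Fin 1) ℂ))
      (fun _ _ _ _ => (1 : Matrix (Fin 1) (Fin 1) ℂ))
      (fun _ : Fin 1 × Fin 1 => (1:ℂ)) = 5/6 := by
  unfold accProb
  simp only [ite_self, cinner_one1, Complex.one_re]
  have habc : (∑ a : Bool, ∑ b : Bool, ∑ c : Bool,
      ((1:ℝ) + (if a && b then (-1:ℝ) else 1) * 1)/2) = 6 := by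
    simp [Fintype.sum_bool]
    norm_num
  simp only [habc]
  rw [sum_offdiag (6:ℝ)]
  have hone : (∑ _i : Fin n, ∑ _a : Bool, ((1:ℝ) + 1) / 2) = (n:ℝ) * 2 := by
    simp [Fintype.sum_bool]
  rw [hone]
  have hn0 : (n:ℝ) ≠ 0 := by
    have : (0:ℝ) < n := by exact_mod_cast Nat.lt_of_lt_of_le (by norm_num) hn
    linarith
  have hn1 : (n:ℝ) - 1 ≠ 0 := by
    have : (2:ℝ) ≤ n := by exact_mod_cast hn
    linarith
  field_simp
  ring

lemma vR_le_57 : vR ≤ 5/7 := by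
  rw [vR_eq, div_le_iff₀ (by norm_num : (0:ℝ) < 2)]
  have h : Real.sqrt 2 ≤ 10/7 := by
    rw [show (10:ℝ)/7 = Real.sqrt ((10/7)^2) from (Real.sqrt_sq (by norm_num)).symm]
    apply Real.sqrt_le_sqrt
    norm_num
  linarith

end Stmt11

/-- a low-dimensional attack on the n-qubit protocol. -/
theorem stmt_11 :
    ∃ C : ℝ, 0 < C ∧
    ∀ (ε : ℝ), 0 < ε → ∀ (n : ℕ), 2 ≤ n →
    ∃ (dA dB : ℕ)
      (XA ZA : Fin n → Matrix (Fin dA) (Fin dA) ℂ)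
      (XB ZB : Fin n → Matrix (Fin dB) (Fin dB) ℂ)
      (PiA : Fin n → Fin n → Bool → Bool → Bool → Bool → Matrix (Fin dA) (Fin dA) ℂ)
      (PiB : Fin n → Fin n → Bool → Bool → Bool → Bool → Matrix (Fin dB) (Fin dB) ℂ)
      (RA : Fin n → Bool → Fin n → Bool → Matrix (Fin dA) (Fin dA) ℂ)
      (RB : Fin n → Bool → Fin n → Bool → Matrix (Fin dB) (Fin dB) ℂ)
      (ψ : Fin dA × Fin dB → ℂ),
      StratValid n XA ZA XB ZB PiA PiB ψ ∧
      RChar PiA RA ∧ RChar PiB RB ∧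
      (dA : ℝ) ≤ (2 : ℝ) ^ (C * Real.log n / ε ^ 2) ∧
      (dB : ℝ) ≤ (2 : ℝ) ^ (C * Real.log n / ε ^ 2) ∧
      accProb n XA ZA XB ZB RA RB ψ ≥ omegaOpt - ε := by
  classical
  refine ⟨100, by norm_num, ?_⟩
  intro ε hε n hn
  have hn1R : (1:ℝ) ≤ (n:ℝ) := by exact_mod_cast Nat.one_le_of_lt hn
  have hn2R : (2:ℝ) ≤ (n:ℝ) := by exact_mod_cast hn
  have hlogn0 : 0 ≤ Real.log n := Real.log_nonneg hn1R
  by_cases hcase : ε < 1/14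
  · -- the entangled low-dimensional strategy
    set k := ⌈(2:ℝ)/ε⌉₊ with hkdef
    have hkpos : 0 < k := Nat.ceil_pos.mpr (by positivity)
    have hk2 : (2:ℝ)/ε ≤ (k:ℝ) := Nat.le_ceil _
    have hkub : (k:ℝ) < 2/ε + 1 := Nat.ceil_lt_add_one (by positivity)
    have hdim : ((2^k : ℕ) : ℝ) ≤ (2:ℝ) ^ ((100:ℝ) * Real.log n / ε^2) := by
      have hcast : ((2^k : ℕ) : ℝ) = (2:ℝ)^(k:ℕ) := by push_cast; ring
      rw [hcast, ← Real.rpow_natCast 2 k]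
      apply Real.rpow_le_rpow_of_exponent_le (by norm_num)
      have hlogn : Real.log 2 ≤ Real.log n := Real.log_le_log (by norm_num) hn2R
      have hlog2 := Real.log_two_gt_d9
      rw [le_div_iff₀ (by positivity : (0:ℝ) < ε^2)]
      have hkε : (k:ℝ) * ε < 2 + ε := by
        have h := mul_lt_mul_of_pos_right hkub hε
        calc (k:ℝ)*ε < (2/ε + 1)*ε := h
          _ = 2 + ε := by field_simp
      have h5 : (k:ℝ)*ε^2 < (2+ε)*ε := by nlinarith [hkε, hε]
      have h6 : (2+ε)*ε < 1 := by nlinarith [hε, hcase]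
      have h7 : (1:ℝ) ≤ 100*Real.log n := by nlinarith [hlogn, hlog2]
      linarith
    refine ⟨2^k, 2^k, Stmt11.XAs (Stmt11.hashf n k hkpos), Stmt11.ZAs (Stmt11.hashf n k hkpos),
      Stmt11.XAs (Stmt11.hashf n k hkpos), Stmt11.ZAs (Stmt11.hashf n k hkpos),
      Stmt11.Pils (Stmt11.hashf n k hkpos), Stmt11.Pils (Stmt11.hashf n k hkpos),
      Stmt11.Rls (Stmt11.hashf n k hkpos), Stmt11.Rls (Stmt11.hashf n k hkpos),
      Stmt11.psis k,
      Stmt11.strat_valid _, Stmt11.strat_rchar _, Stmt11.strat_rchar _, hdim, hdim, ?_⟩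
    rw [ge_iff_le, Stmt11.accProb_eval (Stmt11.hashf n k hkpos) hn, Stmt11.omegaOpt_eq]
    set S := (∑ i : Fin n, ∑ j : Fin n,
      if ¬ i = j ∧ Stmt11.hashf n k hkpos i = Stmt11.hashf n k hkpos j then (1:ℝ) else 0)
      with hSdef
    have hS0 : 0 ≤ S := by
      apply Finset.sum_nonneg
      intro i _
      apply Finset.sum_nonneg
      intro j _
      split <;> norm_num
    have hSb : S ≤ (n:ℝ) * (((n:ℝ) - 1)/k) := Stmt11.Nc_bound n k hkpos hn
    have hn0 : (n:ℝ) ≠ 0 := by linarith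
    have hn1 : (n:ℝ) - 1 ≠ 0 := by linarith
    have hD : (0:ℝ) < (n:ℝ)*((n:ℝ)-1) := by nlinarith
    have hkR : (0:ℝ) < (k:ℝ) := by exact_mod_cast hkpos
    have hexp : 1/3 * (1 + 2 * ((1 / (8*(n:ℝ)*((n:ℝ)-1))) *
          (((n:ℝ)^2 - (n:ℝ)) * (4+4*Stmt11.vR) - S * (4*Stmt11.vR))))
        = (2 + Stmt11.vR)/3 - Stmt11.vR*S/(3*((n:ℝ)*((n:ℝ)-1))) := by
      field_simp
      ring
    rw [hexp]
    have h1 : Stmt11.vR * S ≤ S := by nlinarith [Stmt11.vR_lt_one, Stmt11.vR_pos, hS0]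
    have h2 : S ≤ ((n:ℝ)*((n:ℝ)-1))/k := by
      rw [show ((n:ℝ)*((n:ℝ)-1))/k = (n:ℝ)*(((n:ℝ)-1)/k) from by ring]
      exact hSb
    have hεk : 2 ≤ (k:ℝ)*ε := by
      rw [div_le_iff₀ hε] at hk2
      linarith
    have h3 : Stmt11.vR*S/(3*((n:ℝ)*((n:ℝ)-1))) ≤ ε := by
      rw [div_le_iff₀ (by positivity)]
      have h4 : ((n:ℝ)*((n:ℝ)-1))/k ≤ ε * (3*((n:ℝ)*((n:ℝ)-1))) := by
        rw [div_le_iff₀ hkR]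
        nlinarith [hD, hεk, hε]
      calc Stmt11.vR*S ≤ S := h1
        _ ≤ ((n:ℝ)*((n:ℝ)-1))/k := h2
        _ ≤ ε * (3*((n:ℝ)*((n:ℝ)-1))) := h4
    linarith
  · -- the trivial classical strategy
    push_neg at hcase
    have hx : 0 ≤ (100:ℝ) * Real.log n / ε^2 :=
      div_nonneg (by linarith) (sq_nonneg ε)
    have hdim : ((1:ℕ) : ℝ) ≤ (2:ℝ) ^ ((100:ℝ) * Real.log n / ε^2) := by
      have h0 : ((1:ℕ):ℝ) = (2:ℝ) ^ (0:ℝ) := by rw [Real.rpow_zero]; norm_num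
      rw [h0]
      exact Real.rpow_le_rpow_of_exponent_le (by norm_num) hx
    refine ⟨1, 1, (fun _ : Fin n => (1 : Matrix (Fin 1) (Fin 1) ℂ)), (fun _ => 1),
      (fun _ : Fin n => (1 : Matrix (Fin 1) (Fin 1) ℂ)), (fun _ => 1),
      (fun _ _ _ _ => Stmt11.PiTriv), (fun _ _ _ _ => Stmt11.PiTriv),
      (fun _ _ _ _ => (1 : Matrix (Fin 1) (Fin 1) ℂ)),
      (fun _ _ _ _ => (1 : Matrix (Fin 1) (Fin 1) ℂ)),
      (fun _ : Fin 1 × Fin 1 => (1:ℂ)), ?_, ?_, ?_, hdim, hdim, ?_⟩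
    · exact ⟨Stmt11.cnorm_one1, fun i => ⟨Stmt11.refl_one1, Stmt11.refl_one1,
        Stmt11.refl_one1, Stmt11.refl_one1⟩,
        fun i j _ b c => Stmt11.ProjMeas_triv, fun i j _ b c => Stmt11.ProjMeas_triv⟩
    · exact fun i j _ b c => ⟨Stmt11.PiTriv_sumX.symm, Stmt11.PiTriv_sumY.symm⟩
    · exact fun i j _ b c => ⟨Stmt11.PiTriv_sumX.symm, Stmt11.PiTriv_sumY.symm⟩
    · rw [ge_iff_le, Stmt11.accProb_one n hn, Stmt11.omegaOpt_eq]
      have hv : Stmt11.vR ≤ 5/7 := Stmt11.vR_le_57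
      linarith

end
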